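/- Let G be a directed acyclic graph on a finite set V and P a composition of V. Define C(G,P) to be the set of compositions Q of V refining P such that for every directed edge (v,v') of G, the index of the part of Q containing v is strictly less than the index of the part containing v'. Then \sum_{Q \in C(G,P)} (-1)^{l(Q)} equals 0 if there is an edge (v,v') of G with the part-index of v' in P strictly less than that of v, and equals (-1)^{|V|} otherwise. -/

import Mathlib

/-- `P` is a composition of the finite set `I`: a list of nonempty pairwise disjoint
finsets whose union is `I`. -/
def IsComp {α : Type*} [DecidableEq α] (I : Finset α) (P : List (Finset α)) : Prop :=
  (∀ p ∈ P, p.Nonempty) ∧ P.Pairwise Disjoint ∧ P.foldr (· ∪ ·) ∅ = I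

/-- `Q` refines `P`: `Q` is the concatenation of compositions of the parts of `P`, in order. -/
def Refines {α : Type*} [DecidableEq α] (Q P : List (Finset α)) : Prop :=
  ∃ Qs : List (List (Finset α)), List.Forall₂ (fun qs p => IsComp p qs) Qs P ∧ Q = Qs.flatten

/-- The index of the part of the composition `P` containing `v`. -/
def idx {α : Type*} [DecidableEq α] (P : List (Finset α)) (v : α) : ℕ :=
  P.findIdx (fun s => decide (v ∈ s))

namespace StmtAux

open Finset

variable {α : Type*} [DecidableEq α]

lemma mem_foldr_union {Q : List (Finset α)} {v : α} :
    v ∈ Q.foldr (· ∪ ·) ∅ ↔ ∃ q ∈ Q, v ∈ q := by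
  induction Q with
  | nil => simp
  | cons a Q ih => simp [List.foldr_cons, Finset.mem_union, ih]

lemma idx_cons {A : Finset α} {Q : List (Finset α)} {v : α} :
    idx (A :: Q) v = if v ∈ A then 0 else idx Q v + 1 := by
  simp [idx, List.findIdx_cons, Bool.cond_eq_if]

lemma idx_lt_length {Q : List (Finset α)} {v : α} :
    idx Q v < Q.length ↔ ∃ q ∈ Q, v ∈ q := by
  simp [idx]

lemma idx_append_left {Q₁ Q₂ : List (Finset α)} {v : α} (h : ∃ q ∈ Q₁, v ∈ q) :
    idx (Q₁ ++ Q₂) v = idx Q₁ v := by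
  rw [idx, List.findIdx_append, if_pos]
  · rfl
  · exact idx_lt_length.mpr h

lemma idx_append_right {Q₁ Q₂ : List (Finset α)} {v : α} (h : ∀ q ∈ Q₁, v ∉ q) :
    idx (Q₁ ++ Q₂) v = idx Q₂ v + Q₁.length := by
  rw [idx, List.findIdx_append, if_neg]
  · rfl
  · rw [not_lt]
    refine le_of_eq (Eq.symm ?_)
    rw [List.findIdx_eq_length]
    simpa using h

lemma isComp_nil {S : Finset α} : IsComp S ([] : List (Finset α)) ↔ S = ∅ := by
  constructor
  · rintro ⟨-, -, h⟩; exact h.symm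
  · rintro rfl; exact ⟨by simp, by simp, rfl⟩

lemma isComp_cons {S A : Finset α} {Q : List (Finset α)} :
    IsComp S (A :: Q) ↔ A.Nonempty ∧ A ⊆ S ∧ IsComp (S \ A) Q := by
  constructor
  · rintro ⟨hne, hpw, hfold⟩
    have hAQdisj : ∀ q ∈ Q, Disjoint A q := fun q hq => (List.pairwise_cons.mp hpw).1 q hq
    have hAS : A ⊆ S := by
      intro v hv; rw [← hfold]; exact Finset.mem_union_left _ hv
    refine ⟨hne A (by simp), hAS, fun q hq => hne q (by simp [hq]),
      (List.pairwise_cons.mp hpw).2, ?_⟩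
    ext v
    simp only [Finset.mem_sdiff, ← hfold]
    constructor
    · intro hv
      have hvq := mem_foldr_union.mp hv
      obtain ⟨q, hq, hvq'⟩ := hvq
      refine ⟨Finset.mem_union_right _ hv, fun hvA => ?_⟩
      have hbot : v ∈ (⊥ : Finset α) := (hAQdisj q hq).le_bot (by simp [hvA, hvq'] : v ∈ A ⊓ q)
      simp at hbot
    · rintro ⟨hv, hvA⟩
      rcases Finset.mem_union.mp hv with h | h
      · exact absurd h hvA
      · exact h
  · rintro ⟨hAne, hAS, hne, hpw, hfold⟩
    refine ⟨?_, ?_, ?_⟩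
    · intro p hp
      rcases List.mem_cons.mp hp with rfl | hp
      · exact hAne
      · exact hne p hp
    · rw [List.pairwise_cons]
      refine ⟨fun q hq => ?_, hpw⟩
      have : q ⊆ S \ A := by
        intro v hv; rw [← hfold]; exact mem_foldr_union.mpr ⟨q, hq, hv⟩
      exact Finset.disjoint_left.mpr fun {v} hvA hvq =>
        (Finset.mem_sdiff.mp (this hvq)).2 hvA
    · show A ∪ Q.foldr (· ∪ ·) ∅ = S
      rw [hfold]
      exact Finset.union_sdiff_of_subset hAS

lemma isComp_parts_subset {S : Finset α} {Q : List (Finset α)} (h : IsComp S Q)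
    {q : Finset α} (hq : q ∈ Q) : q ⊆ S := by
  intro v hv
  rw [← h.2.2]
  exact mem_foldr_union.mpr ⟨q, hq, hv⟩

lemma isComp_length_le {Q : List (Finset α)} : ∀ {S : Finset α}, IsComp S Q →
    Q.length ≤ S.card := by
  induction Q with
  | nil => intro S h; simp
  | cons A Q ih =>
    intro S h
    obtain ⟨hAne, hAS, h'⟩ := isComp_cons.mp h
    have h1 := ih h'
    have h2 : (S \ A).card = S.card - A.card := Finset.card_sdiff_of_subset hAS
    have h3 : 1 ≤ A.card := Finset.card_pos.mpr hAne
    have h4 : A.card ≤ S.card := Finset.card_le_card hAS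
    simp only [List.length_cons]
    omega

lemma idx_lt_length_of_mem {S : Finset α} {Q : List (Finset α)} (h : IsComp S Q)
    {v : α} (hv : v ∈ S) : idx Q v < Q.length := by
  rw [idx_lt_length]
  rw [← h.2.2] at hv
  exact mem_foldr_union.mp hv

lemma finite_isComp (S : Finset α) : {Q : List (Finset α) | IsComp S Q}.Finite := by
  have h1 : {l : List {A : Finset α // A ∈ S.powerset} | l.length ≤ S.card}.Finite :=
    List.finite_length_le _ _
  apply Set.Finite.subset (h1.image (List.map Subtype.val))
  intro Q hQ
  refine ⟨Q.attach.map (fun x => ⟨x.1, Finset.mem_powerset.mpr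
    (isComp_parts_subset hQ x.2)⟩), ?_, ?_⟩
  · simpa using isComp_length_le hQ
  · simp [List.map_map]

lemma isComp_append {B : Finset α} {Q₁ Q₂ : List (Finset α)} :
    ∀ {A : Finset α}, IsComp A Q₁ → IsComp B Q₂ → Disjoint A B →
      IsComp (A ∪ B) (Q₁ ++ Q₂) := by
  induction Q₁ with
  | nil =>
    intro A h1 h2 hd
    rw [isComp_nil] at h1
    subst h1
    simpa using h2
  | cons a Q₁ ih =>
    intro A h1 h2 hd
    obtain ⟨hane, haA, h1'⟩ := isComp_cons.mp h1
    rw [List.cons_append, isComp_cons]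
    refine ⟨hane, haA.trans Finset.subset_union_left, ?_⟩
    have hab : Disjoint a B := hd.mono_left haA
    have : (A ∪ B) \ a = (A \ a) ∪ B := by
      rw [Finset.union_sdiff_distrib, Finset.sdiff_eq_self_of_disjoint hab.symm]
    rw [this]
    exact ih h1' h2 (hd.mono_left Finset.sdiff_subset)

lemma refines_nil {Q : List (Finset α)} : Refines Q ([] : List (Finset α)) ↔ Q = [] := by
  constructor
  · rintro ⟨Qs, hQs, rfl⟩
    rw [List.forall₂_nil_right_iff] at hQs
    subst hQs; rfl
  · rintro rfl; exact ⟨[], List.Forall₂.nil, rfl⟩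

lemma refines_cons {Q : List (Finset α)} {A : Finset α} {P : List (Finset α)} :
    Refines Q (A :: P) ↔ ∃ Q₁ Q₂, IsComp A Q₁ ∧ Refines Q₂ P ∧ Q = Q₁ ++ Q₂ := by
  constructor
  · rintro ⟨Qs, hQs, rfl⟩
    rw [List.forall₂_cons_right_iff] at hQs
    obtain ⟨q, Qs', hq, hQs', rfl⟩ := hQs
    exact ⟨q, Qs'.flatten, hq, ⟨Qs', hQs', rfl⟩, by simp⟩
  · rintro ⟨Q₁, Q₂, h1, ⟨Qs, hQs, rfl⟩, rfl⟩
    exact ⟨Q₁ :: Qs, List.Forall₂.cons h1 hQs, by simp⟩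

lemma refines_isComp {P : List (Finset α)} : ∀ {S : Finset α} {Q : List (Finset α)},
    IsComp S P → Refines Q P → IsComp S Q := by
  induction P with
  | nil =>
    intro S Q hP hQ
    rw [refines_nil] at hQ
    subst hQ
    rw [isComp_nil] at hP ⊢
    exact hP
  | cons A P ih =>
    intro S Q hP hQ
    obtain ⟨hAne, hAS, hP'⟩ := isComp_cons.mp hP
    obtain ⟨Q₁, Q₂, h1, h2, rfl⟩ := refines_cons.mp hQ
    have h2' := ih hP' h2
    have := isComp_append h1 h2' Finset.disjoint_sdiff
    rwa [Finset.union_sdiff_of_subset hAS] at this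

lemma refines_mono {P : List (Finset α)} : ∀ {S : Finset α} {Q : List (Finset α)} {v w : α},
    IsComp S P → Refines Q P → v ∈ S → w ∈ S → idx P v < idx P w → idx Q v < idx Q w := by
  induction P with
  | nil =>
    intro S Q v w hP _ hv _ _
    rw [isComp_nil] at hP; subst hP; simp at hv
  | cons A P ih =>
    intro S Q v w hP hQ hv hw hlt
    obtain ⟨hAne, hAS, hP'⟩ := isComp_cons.mp hP
    obtain ⟨Q₁, Q₂, h1, h2, rfl⟩ := refines_cons.mp hQ
    have hQ₁A : ∀ q ∈ Q₁, q ⊆ A := fun q hq => isComp_parts_subset h1 hq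
    rw [idx_cons, idx_cons] at hlt
    by_cases hvA : v ∈ A
    · rw [if_pos hvA] at hlt
      have hwA : w ∉ A := by
        intro hwA; rw [if_pos hwA] at hlt; exact absurd hlt (lt_irrefl 0)
      have hidxv : idx (Q₁ ++ Q₂) v = idx Q₁ v := by
        apply idx_append_left
        rw [← idx_lt_length]
        exact idx_lt_length_of_mem h1 hvA
      have hidxw : idx (Q₁ ++ Q₂) w = idx Q₂ w + Q₁.length := by
        apply idx_append_right
        intro q hq hwq
        exact hwA (hQ₁A q hq hwq)
      rw [hidxv, hidxw]
      have := idx_lt_length_of_mem h1 hvA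
      omega
    · rw [if_neg hvA] at hlt
      have hwA : w ∉ A := by
        intro hwA; rw [if_pos hwA] at hlt; omega
      rw [if_neg hwA] at hlt
      have hvS' : v ∈ S \ A := Finset.mem_sdiff.mpr ⟨hv, hvA⟩
      have hwS' : w ∈ S \ A := Finset.mem_sdiff.mpr ⟨hw, hwA⟩
      have hidxv : idx (Q₁ ++ Q₂) v = idx Q₂ v + Q₁.length := by
        apply idx_append_right
        intro q hq hvq
        exact hvA (hQ₁A q hq hvq)
      have hidxw : idx (Q₁ ++ Q₂) w = idx Q₂ w + Q₁.length := by
        apply idx_append_right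
        intro q hq hwq
        exact hwA (hQ₁A q hq hwq)
      rw [hidxv, hidxw]
      have := ih hP' h2 hvS' hwS' (by omega)
      omega

lemma finite_resp (S : Finset α) (G : Finset (α × α)) :
    {Q : List (Finset α) | IsComp S Q ∧ ∀ p ∈ G, idx Q p.1 < idx Q p.2}.Finite :=
  (finite_isComp S).subset fun _ hQ => hQ.1

lemma finite_ref {P : List (Finset α)} {S : Finset α} (hP : IsComp S P)
    (G : Finset (α × α)) :
    {Q : List (Finset α) | Refines Q P ∧ ∀ p ∈ G, idx Q p.1 < idx Q p.2}.Finite :=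
  (finite_isComp S).subset fun _ hQ => refines_isComp hP hQ.1

lemma exists_source (S : Finset α) (hS : S.Nonempty) (G : Finset (α × α))
    (hGS : ∀ p ∈ G, p.1 ∈ S ∧ p.2 ∈ S)
    (hacyc : ∀ v, ¬ Relation.TransGen (fun u w => (u, w) ∈ G) v v) :
    ∃ v ∈ S, ∀ p ∈ G, p.2 ≠ v := by
  by_contra hcon
  push_neg at hcon
  obtain ⟨v₀, hv₀⟩ := hS
  have step : ∀ v ∈ S, ∃ u ∈ S, (u, v) ∈ G := by
    intro v hv
    obtain ⟨p, hp, hpv⟩ := hcon v hv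
    exact ⟨p.1, (hGS p hp).1, by rwa [show (p.1, v) = p by rw [← hpv]]⟩
  classical
  let f : α → α := fun v => if hv : ∃ u ∈ S, (u, v) ∈ G then hv.choose else v₀
  let g : ℕ → α := fun n => f^[n] v₀
  have hmem : ∀ n, g n ∈ S := by
    intro n
    induction n with
    | zero => exact hv₀
    | succ n ihn =>
      have h' := step (g n) ihn
      have : g (n + 1) = f (g n) := Function.iterate_succ_apply' f n v₀
      rw [this]
      simp only [f, dif_pos h']
      exact h'.choose_spec.1
  have hedge : ∀ n, (g (n + 1), g n) ∈ G := by
    intro n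
    have h' := step (g n) (hmem n)
    have : g (n + 1) = f (g n) := Function.iterate_succ_apply' f n v₀
    rw [this]
    simp only [f, dif_pos h']
    exact h'.choose_spec.2
  have chain : ∀ m k, Relation.TransGen (fun u w => (u, w) ∈ G) (g (m + k + 1)) (g m) := by
    intro m k
    induction k with
    | zero => exact Relation.TransGen.single (hedge m)
    | succ k ihk => exact Relation.TransGen.head (hedge (m + k + 1)) ihk
  obtain ⟨i, hi, j, hj, hij, hgij⟩ :=
    Finset.exists_ne_map_eq_of_card_lt_of_maps_to
      (s := Finset.range (S.card + 1)) (t := S) (by simp) (fun n _ => hmem n)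
  rcases Ne.lt_or_gt hij with h | h
  · have := chain i (j - i - 1)
    rw [show i + (j - i - 1) + 1 = j by omega, hgij] at this
    exact hacyc _ this
  · have := chain j (i - j - 1)
    rw [show j + (i - j - 1) + 1 = i by omega, ← hgij] at this
    exact hacyc _ this

lemma neg_one_pow_sub {a s : ℕ} (h : a ≤ s) :
    ((-1 : ℤ)) ^ (s - a) = (-1) ^ s * (-1) ^ a := by
  have h1 : (-1 : ℤ) ^ (s - a) * (-1) ^ a = (-1) ^ s := by
    rw [← pow_add, Nat.sub_add_cancel h]
  have h2 : (-1 : ℤ) ^ a * (-1) ^ a = 1 := by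
    rw [← pow_add]
    exact Even.neg_one_pow ⟨a, rfl⟩
  calc ((-1 : ℤ)) ^ (s - a) = (-1) ^ (s - a) * ((-1) ^ a * (-1) ^ a) := by rw [h2, mul_one]
    _ = ((-1) ^ (s - a) * (-1) ^ a) * (-1) ^ a := by ring
    _ = (-1) ^ s * (-1) ^ a := by rw [h1]

lemma isComp_empty {Q : List (Finset α)} : IsComp (∅ : Finset α) Q ↔ Q = [] := by
  cases Q with
  | nil => simp [isComp_nil]
  | cons A Q =>
    simp only [isComp_cons]
    constructor
    · rintro ⟨hne, hsub, -⟩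
      exact absurd ((Finset.subset_empty.mp hsub)) hne.ne_empty
    · intro h; exact absurd h (by simp)

lemma core_base (S : Finset α) (G : Finset (α × α)) (hS : S = ∅)
    (hGS : ∀ p ∈ G, p.1 ∈ S ∧ p.2 ∈ S) :
    ∑ Q ∈ (finite_resp S G).toFinset, (-1 : ℤ) ^ Q.length = (-1) ^ S.card := by
  subst hS
  have hG : G = ∅ := Finset.eq_empty_of_forall_notMem fun p hp => by
    simpa using (hGS p hp).1
  subst hG
  have htf : (finite_resp (∅ : Finset α) (∅ : Finset (α × α))).toFinset = {[]} := by
    ext Q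
    simp [Set.Finite.mem_toFinset, isComp_empty]
  rw [htf]
  simp

lemma core (n : ℕ) : ∀ (S : Finset α) (G : Finset (α × α)),
    S.card ≤ n → (∀ p ∈ G, p.1 ∈ S ∧ p.2 ∈ S) →
    (∀ v, ¬ Relation.TransGen (fun u w => (u, w) ∈ G) v v) →
    ∑ Q ∈ (finite_resp S G).toFinset, (-1 : ℤ) ^ Q.length = (-1) ^ S.card := by
  induction n with
  | zero =>
    intro S G hcard hGS hacyc
    exact core_base S G (Finset.card_eq_zero.mp (Nat.le_zero.mp hcard)) hGS
  | succ n ihn =>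
    intro S G hcard hGS hacyc
    rcases S.eq_empty_or_nonempty with hS | hS
    · exact core_base S G hS hGS
    classical
    set M := S.filter (fun v => ∀ p ∈ G, p.2 ≠ v) with hM
    have hMne : M.Nonempty := by
      obtain ⟨v, hv, hvsrc⟩ := exists_source S hS G hGS hacyc
      exact ⟨v, Finset.mem_filter.mpr ⟨hv, hvsrc⟩⟩
    have hMS : M ⊆ S := Finset.filter_subset _ _
    set valid := M.powerset.filter Finset.Nonempty with hvalid
    set T : Finset α → Finset (List (Finset α)) :=
      fun A => (finite_resp (S \ A) (G.filter (fun p => p.1 ∉ A))).toFinset with hT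
    have hmemM : ∀ {A : Finset α}, A ⊆ M → ∀ p ∈ G, p.2 ∉ A := by
      intro A hAM p hp hp2
      exact (Finset.mem_filter.mp (hAM hp2)).2 p hp rfl
    have hbij : ∑ Q ∈ (finite_resp S G).toFinset, (-1 : ℤ) ^ Q.length
        = ∑ x ∈ valid.sigma T, (-1 : ℤ) ^ (x.2.length + 1) := by
      apply Finset.sum_nbij'
        (i := fun Q => (⟨Q.headI, Q.tail⟩ : Σ _ : Finset α, List (Finset α)))
        (j := fun x => x.1 :: x.2)
      · intro Q hQ
        rw [Set.Finite.mem_toFinset] at hQ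
        obtain ⟨hcomp, hresp⟩ := hQ
        cases Q with
        | nil => exact absurd (isComp_nil.mp hcomp) hS.ne_empty
        | cons A Q' =>
          obtain ⟨hAne, hAS, hcomp'⟩ := isComp_cons.mp hcomp
          have hp2A : ∀ p ∈ G, p.2 ∉ A := by
            intro p hp hp2
            have := hresp p hp
            rw [idx_cons, idx_cons, if_pos hp2] at this
            omega
          rw [Finset.mem_sigma]
          constructor
          · rw [hvalid, Finset.mem_filter, Finset.mem_powerset]
            refine ⟨fun v hvA => Finset.mem_filter.mpr ⟨hAS hvA, fun p hp hp2 =>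
              hp2A p hp (hp2 ▸ hvA)⟩, hAne⟩
          · show Q' ∈ T A
            rw [hT, Set.Finite.mem_toFinset]
            refine ⟨hcomp', fun p hp => ?_⟩
            obtain ⟨hpG, hp1⟩ := Finset.mem_filter.mp hp
            have := hresp p hpG
            rw [idx_cons, idx_cons, if_neg hp1, if_neg (hp2A p hpG)] at this
            omega
      · intro x hx
        rw [Finset.mem_sigma] at hx
        obtain ⟨hx1, hx2⟩ := hx
        rw [hvalid, Finset.mem_filter, Finset.mem_powerset] at hx1
        obtain ⟨hAM, hAne⟩ := hx1
        rw [hT, Set.Finite.mem_toFinset] at hx2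
        obtain ⟨hcomp', hresp'⟩ := hx2
        rw [Set.Finite.mem_toFinset]
        have hp2A : ∀ p ∈ G, p.2 ∉ x.1 := hmemM hAM
        constructor
        · exact isComp_cons.mpr ⟨hAne, hAM.trans hMS, hcomp'⟩
        · intro p hp
          rw [idx_cons, idx_cons, if_neg (hp2A p hp)]
          by_cases h1 : p.1 ∈ x.1
          · rw [if_pos h1]; omega
          · rw [if_neg h1]
            have := hresp' p (Finset.mem_filter.mpr ⟨hp, h1⟩)
            omega
      · intro Q hQ
        rw [Set.Finite.mem_toFinset] at hQ
        cases Q with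
        | nil => exact absurd (isComp_nil.mp hQ.1) hS.ne_empty
        | cons A Q' => rfl
      · intro x hx; rfl
      · intro Q hQ
        rw [Set.Finite.mem_toFinset] at hQ
        cases Q with
        | nil => exact absurd (isComp_nil.mp hQ.1) hS.ne_empty
        | cons A Q' => simp
    rw [hbij, Finset.sum_sigma]
    have hinner : ∀ A ∈ valid, (∑ x ∈ T A, (-1 : ℤ) ^ (x.length + 1))
        = (-(-1 : ℤ) ^ S.card) * (-1) ^ A.card := by
      intro A hA
      rw [hvalid, Finset.mem_filter, Finset.mem_powerset] at hA
      obtain ⟨hAM, hAne⟩ := hA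
      have hAS : A ⊆ S := hAM.trans hMS
      have hc1 : A.card ≤ S.card := Finset.card_le_card hAS
      have hc2 : 1 ≤ A.card := Finset.card_pos.mpr hAne
      have h1 : (S \ A).card ≤ n := by
        have := Finset.card_sdiff_of_subset hAS
        omega
      have h2 : ∀ p ∈ G.filter (fun p => p.1 ∉ A), p.1 ∈ S \ A ∧ p.2 ∈ S \ A := by
        intro p hp
        obtain ⟨hpG, hp1⟩ := Finset.mem_filter.mp hp
        exact ⟨Finset.mem_sdiff.mpr ⟨(hGS p hpG).1, hp1⟩,
          Finset.mem_sdiff.mpr ⟨(hGS p hpG).2, hmemM hAM p hpG⟩⟩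
      have h3 : ∀ v, ¬ Relation.TransGen
          (fun u w => (u, w) ∈ G.filter (fun p => p.1 ∉ A)) v v := by
        intro v hv
        exact hacyc v (Relation.TransGen.mono (fun u w h => (Finset.mem_filter.mp h).1) v v hv)
      have hih := ihn (S \ A) (G.filter (fun p => p.1 ∉ A)) h1 h2 h3
      calc (∑ x ∈ T A, (-1 : ℤ) ^ (x.length + 1))
          = ∑ x ∈ T A, (-1) * (-1 : ℤ) ^ x.length :=
            Finset.sum_congr rfl (fun x _ => by ring)
        _ = (-1) * ∑ x ∈ T A, (-1 : ℤ) ^ x.length := by rw [Finset.mul_sum]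
        _ = (-1) * (-1 : ℤ) ^ ((S \ A).card) := by rw [hT] at *; rw [hih]
        _ = (-(-1 : ℤ) ^ S.card) * (-1) ^ A.card := by
            rw [Finset.card_sdiff_of_subset hAS, neg_one_pow_sub hc1]; ring
    rw [Finset.sum_congr rfl hinner, ← Finset.mul_sum]
    have hvalid_erase : valid = M.powerset.erase ∅ := by
      ext A
      rw [hvalid, Finset.mem_filter, Finset.mem_erase, Finset.nonempty_iff_ne_empty, and_comm]
    rw [hvalid_erase, Finset.sum_erase_eq_sub (Finset.empty_mem_powerset M),
      Finset.sum_powerset_neg_one_pow_card, if_neg (Finset.nonempty_iff_ne_empty.mp hMne)]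
    simp


lemma takeWhile_dropWhile_eq {β : Type*} (p : β → Bool) :
    ∀ (l₁ l₂ : List β), (∀ b ∈ l₁, p b = true) → (∀ b ∈ l₂.head?, p b = false) →
    (l₁ ++ l₂).takeWhile p = l₁ ∧ (l₁ ++ l₂).dropWhile p = l₂ := by
  intro l₁
  induction l₁ with
  | nil =>
    intro l₂ _ h2
    cases l₂ with
    | nil => simp
    | cons b t =>
      have hb : p b = false := h2 b rfl
      simp [List.takeWhile_cons, List.dropWhile_cons, hb]
  | cons a l₁ ih =>
    intro l₂ h1 h2
    have ha : p a = true := h1 a (by simp)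
    have hih := ih l₂ (fun b hb => h1 b (by simp [hb])) h2
    simp [List.takeWhile_cons, List.dropWhile_cons, ha, hih.1, hih.2]

lemma refsum (P : List (Finset α)) : ∀ (S : Finset α) (G : Finset (α × α))
    (hP : IsComp S P), (∀ p ∈ G, p.1 ∈ S ∧ p.2 ∈ S) →
    (∀ v, ¬ Relation.TransGen (fun u w => (u, w) ∈ G) v v) →
    (¬ ∃ p ∈ G, idx P p.2 < idx P p.1) →
    ∑ Q ∈ (finite_ref hP G).toFinset, (-1 : ℤ) ^ Q.length = (-1) ^ S.card := by
  induction P with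
  | nil =>
    intro S G hP hGS hacyc hno
    have hS : S = ∅ := isComp_nil.mp hP
    have htf : (finite_ref hP G).toFinset = {[]} := by
      ext Q
      rw [Set.Finite.mem_toFinset]
      simp only [Set.mem_setOf_eq, refines_nil, Finset.mem_singleton]
      constructor
      · rintro ⟨h, -⟩; exact h
      · rintro rfl
        refine ⟨rfl, fun p hp => ?_⟩
        have h1 := (hGS p hp).1
        rw [hS] at h1
        simp at h1
    rw [htf, hS]
    simp
  | cons A P' ih =>
    intro S G hP hGS hacyc hno
    obtain ⟨hAne, hAS, hP'⟩ := isComp_cons.mp hP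
    classical
    set G₁ := G.filter (fun p => p.2 ∈ A) with hG₁
    set G₂ := G.filter (fun p => p.2 ∉ A ∧ p.1 ∉ A) with hG₂
    have hkey : ∀ p ∈ G, p.2 ∈ A → p.1 ∈ A := by
      intro p hp h2
      by_contra h1
      apply hno
      refine ⟨p, hp, ?_⟩
      rw [idx_cons, idx_cons, if_pos h2, if_neg h1]
      omega
    have hG₁S : ∀ p ∈ G₁, p.1 ∈ A ∧ p.2 ∈ A := by
      intro p hp
      obtain ⟨hpG, h2⟩ := Finset.mem_filter.mp hp
      exact ⟨hkey p hpG h2, h2⟩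
    have hG₂S : ∀ p ∈ G₂, p.1 ∈ S \ A ∧ p.2 ∈ S \ A := by
      intro p hp
      obtain ⟨hpG, h2, h1⟩ := Finset.mem_filter.mp hp
      exact ⟨Finset.mem_sdiff.mpr ⟨(hGS p hpG).1, h1⟩,
        Finset.mem_sdiff.mpr ⟨(hGS p hpG).2, h2⟩⟩
    have hacyc₁ : ∀ v, ¬ Relation.TransGen (fun u w => (u, w) ∈ G₁) v v := by
      intro v hv
      exact hacyc v (Relation.TransGen.mono (fun u w h => (Finset.mem_filter.mp h).1) v v hv)
    have hacyc₂ : ∀ v, ¬ Relation.TransGen (fun u w => (u, w) ∈ G₂) v v := by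
      intro v hv
      exact hacyc v (Relation.TransGen.mono (fun u w h => (Finset.mem_filter.mp h).1) v v hv)
    have hidxA : ∀ (Q₁ Q₂ : List (Finset α)) (v : α), IsComp A Q₁ → v ∈ A →
        idx (Q₁ ++ Q₂) v = idx Q₁ v := by
      intro Q₁ Q₂ v h1 hv
      apply idx_append_left
      rw [← h1.2.2] at hv
      exact mem_foldr_union.mp hv
    have hidxB : ∀ (Q₁ Q₂ : List (Finset α)) (v : α), IsComp A Q₁ → v ∉ A →
        idx (Q₁ ++ Q₂) v = idx Q₂ v + Q₁.length := by
      intro Q₁ Q₂ v h1 hv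
      apply idx_append_right
      intro q hq hvq
      exact hv (isComp_parts_subset h1 hq hvq)
    have hresp_iff : ∀ (Q₁ Q₂ : List (Finset α)), IsComp A Q₁ →
        ((∀ p ∈ G, idx (Q₁ ++ Q₂) p.1 < idx (Q₁ ++ Q₂) p.2) ↔
          (∀ p ∈ G₁, idx Q₁ p.1 < idx Q₁ p.2) ∧ (∀ p ∈ G₂, idx Q₂ p.1 < idx Q₂ p.2)) := by
      intro Q₁ Q₂ h1
      constructor
      · intro hresp
        constructor
        · intro p hp
          obtain ⟨h1A, h2A⟩ := hG₁S p hp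
          have := hresp p (Finset.mem_filter.mp hp).1
          rwa [hidxA Q₁ Q₂ _ h1 h1A, hidxA Q₁ Q₂ _ h1 h2A] at this
        · intro p hp
          obtain ⟨h1A, h2A⟩ := hG₂S p hp
          have := hresp p (Finset.mem_filter.mp hp).1
          rw [hidxB Q₁ Q₂ _ h1 (Finset.mem_sdiff.mp h1A).2,
            hidxB Q₁ Q₂ _ h1 (Finset.mem_sdiff.mp h2A).2] at this
          omega
      · rintro ⟨hr1, hr2⟩ p hp
        by_cases h2A : p.2 ∈ A
        · have h1A := hkey p hp h2A
          rw [hidxA Q₁ Q₂ _ h1 h1A, hidxA Q₁ Q₂ _ h1 h2A]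
          exact hr1 p (Finset.mem_filter.mpr ⟨hp, h2A⟩)
        · by_cases h1A : p.1 ∈ A
          · rw [hidxA Q₁ Q₂ _ h1 h1A, hidxB Q₁ Q₂ _ h1 h2A]
            have := idx_lt_length_of_mem h1 h1A
            omega
          · rw [hidxB Q₁ Q₂ _ h1 h1A, hidxB Q₁ Q₂ _ h1 h2A]
            have := hr2 p (Finset.mem_filter.mpr ⟨hp, h2A, h1A⟩)
            omega
    set pr : Finset α → Bool := fun q => decide (q ⊆ A) with hpr
    have hdecomp : ∀ (Q₁ Q₂ : List (Finset α)), IsComp A Q₁ → Refines Q₂ P' →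
        (Q₁ ++ Q₂).takeWhile pr = Q₁ ∧ (Q₁ ++ Q₂).dropWhile pr = Q₂ := by
      intro Q₁ Q₂ h1 h2
      apply takeWhile_dropWhile_eq
      · intro q hq
        simp only [hpr, decide_eq_true_eq]
        exact isComp_parts_subset h1 hq
      · intro q hq
        have hqmem : q ∈ Q₂ := List.mem_of_mem_head? hq
        have hcomp₂ : IsComp (S \ A) Q₂ := refines_isComp hP' h2
        have hqsub : q ⊆ S \ A := isComp_parts_subset hcomp₂ hqmem
        have hqne : q.Nonempty := hcomp₂.1 q hqmem
        simp only [hpr, decide_eq_false_iff_not]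
        intro hqA
        obtain ⟨v, hv⟩ := hqne
        exact (Finset.mem_sdiff.mp (hqsub hv)).2 (hqA hv)
    have hbij : ∑ Q ∈ (finite_ref hP G).toFinset, (-1 : ℤ) ^ Q.length
        = ∑ x ∈ (finite_resp A G₁).toFinset ×ˢ (finite_ref hP' G₂).toFinset,
            (-1 : ℤ) ^ x.1.length * (-1 : ℤ) ^ x.2.length := by
      apply Finset.sum_nbij' (i := fun Q => (Q.takeWhile pr, Q.dropWhile pr))
        (j := fun x => x.1 ++ x.2)
      · intro Q hQ
        rw [Set.Finite.mem_toFinset] at hQ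
        obtain ⟨href, hresp⟩ := hQ
        obtain ⟨Q₁, Q₂, h1, h2, rfl⟩ := refines_cons.mp href
        obtain ⟨htw, hdw⟩ := hdecomp Q₁ Q₂ h1 h2
        obtain ⟨hr1, hr2⟩ := (hresp_iff Q₁ Q₂ h1).mp hresp
        rw [Finset.mem_product]
        constructor
        · show (Q₁ ++ Q₂).takeWhile pr ∈ _
          rw [htw, Set.Finite.mem_toFinset]
          exact ⟨h1, hr1⟩
        · show (Q₁ ++ Q₂).dropWhile pr ∈ _
          rw [hdw, Set.Finite.mem_toFinset]
          exact ⟨h2, hr2⟩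
      · intro x hx
        rw [Finset.mem_product] at hx
        obtain ⟨hx1, hx2⟩ := hx
        rw [Set.Finite.mem_toFinset] at hx1 hx2
        obtain ⟨h1, hr1⟩ := hx1
        obtain ⟨h2, hr2⟩ := hx2
        rw [Set.Finite.mem_toFinset]
        exact ⟨refines_cons.mpr ⟨x.1, x.2, h1, h2, rfl⟩,
          (hresp_iff x.1 x.2 h1).mpr ⟨hr1, hr2⟩⟩
      · intro Q hQ
        exact List.takeWhile_append_dropWhile (p := pr) (l := Q)
      · intro x hx
        rw [Finset.mem_product] at hx
        obtain ⟨hx1, hx2⟩ := hx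
        rw [Set.Finite.mem_toFinset] at hx1 hx2
        obtain ⟨htw, hdw⟩ := hdecomp x.1 x.2 hx1.1 hx2.1
        exact Prod.ext htw hdw
      · intro Q hQ
        rw [← pow_add]
        congr 1
        conv_lhs => rw [← List.takeWhile_append_dropWhile (p := pr) (l := Q)]
        rw [List.length_append]
    rw [hbij, Finset.sum_product]
    have hfact : ∑ x ∈ (finite_resp A G₁).toFinset, ∑ y ∈ (finite_ref hP' G₂).toFinset,
          (-1 : ℤ) ^ x.length * (-1 : ℤ) ^ y.length
        = (∑ x ∈ (finite_resp A G₁).toFinset, (-1 : ℤ) ^ x.length)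
          * (∑ y ∈ (finite_ref hP' G₂).toFinset, (-1 : ℤ) ^ y.length) := by
      rw [Finset.sum_mul_sum]
    rw [hfact]
    have hcore := core A.card A G₁ le_rfl hG₁S hacyc₁
    have hno₂ : ¬ ∃ p ∈ G₂, idx P' p.2 < idx P' p.1 := by
      rintro ⟨p, hp, hlt⟩
      obtain ⟨hpG, h2, h1⟩ := Finset.mem_filter.mp hp
      apply hno
      refine ⟨p, hpG, ?_⟩
      rw [idx_cons, idx_cons, if_neg h1, if_neg h2]
      omega
    have hih := ih (S \ A) G₂ hP' hG₂S hacyc₂ hno₂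
    rw [hcore, hih, ← pow_add]
    congr 1
    have h1 := Finset.card_sdiff_of_subset hAS
    have h2 := Finset.card_le_card hAS
    omega

end StmtAux

theorem stmt_4 {α : Type*} [DecidableEq α] (V : Finset α) (G : Finset (α × α))
    (hGV : ∀ p ∈ G, p.1 ∈ V ∧ p.2 ∈ V)
    (hacyc : ∀ v : α, ¬ Relation.TransGen (fun u w => (u, w) ∈ G) v v)
    (P : List (Finset α)) (hP : IsComp V P) :
    ((∃ p ∈ G, idx P p.2 < idx P p.1) →
        ∑ᶠ (Q : List (Finset α)) (_ : Refines Q P ∧ ∀ p ∈ G, idx Q p.1 < idx Q p.2),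
          ((-1 : ℤ) ^ Q.length) = 0) ∧
    ((¬ ∃ p ∈ G, idx P p.2 < idx P p.1) →
        ∑ᶠ (Q : List (Finset α)) (_ : Refines Q P ∧ ∀ p ∈ G, idx Q p.1 < idx Q p.2),
          ((-1 : ℤ) ^ Q.length) = (-1) ^ V.card) := by
  classical
  constructor
  · rintro ⟨p, hp, hlt⟩
    have hempty : ∀ Q : List (Finset α),
        ¬ (Refines Q P ∧ ∀ p ∈ G, idx Q p.1 < idx Q p.2) := by
      rintro Q ⟨href, hresp⟩
      have h1 := StmtAux.refines_mono hP href (hGV p hp).2 (hGV p hp).1 hlt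
      have h2 := hresp p hp
      omega
    have hz : ∀ Q : List (Finset α),
        (∑ᶠ _ : (Refines Q P ∧ ∀ p ∈ G, idx Q p.1 < idx Q p.2), ((-1 : ℤ) ^ Q.length)) = 0 := by
      intro Q
      rw [finsum_eq_if, if_neg (hempty Q)]
    rw [finsum_congr hz, finsum_zero]
  · intro hno
    have key := StmtAux.refsum P V G hP hGV hacyc hno
    have heq : (∑ᶠ (Q : List (Finset α))
          (_ : Refines Q P ∧ ∀ p ∈ G, idx Q p.1 < idx Q p.2), ((-1 : ℤ) ^ Q.length))
        = ∑ᶠ Q ∈ {Q : List (Finset α) | Refines Q P ∧ ∀ p ∈ G, idx Q p.1 < idx Q p.2},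
            ((-1 : ℤ) ^ Q.length) := rfl
    rw [heq, finsum_mem_eq_finite_toFinset_sum _ (StmtAux.finite_ref hP G)]
    exact key
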